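/- Let W be a connected graphon and P = {P₁,…,Pₙ} a measurable partition of [0,1] into sets of positive measure. Then the coarsened graphon W_P = step_P(mat_P(W)) is connected. -/

import Mathlib

open MeasureTheory

/-- A graphon is connected if `∫_{U × Uᶜ} W > 0` for every measurable `U ⊆ [0,1]`
with `0 < μ(U) < 1` (complement taken inside `[0,1]`). -/
def GraphonConnected (W : ℝ → ℝ → ℝ) : Prop :=
  ∀ S : Set ℝ, MeasurableSet S → S ⊆ Set.Icc (0:ℝ) 1 →
    0 < volume S → volume S < 1 →
    0 < ∫ x in S, ∫ y in Set.Icc (0:ℝ) 1 \ S, W x y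

lemma integrableOn_of_bdd {f : ℝ → ℝ} {A : Set ℝ} {C : ℝ}
    (hf : AEStronglyMeasurable f (volume.restrict A))
    (hA : volume A ≠ ⊤) (hb : ∀ x, |f x| ≤ C) : IntegrableOn f A := by
  refine Integrable.mono' (g := fun _ => C) ((integrableOn_const_iff (C := C)).2 (Or.inr hA.lt_top)) hf ?_
  exact Filter.Eventually.of_forall fun x => by simpa [Real.norm_eq_abs] using hb x

lemma split_integral {n : ℕ} {P : Fin n → Set ℝ}
    (hPmeas : ∀ i, MeasurableSet (P i))
    (hPdisj : Pairwise fun i j => Disjoint (P i) (P j))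
    {A : Set ℝ} (hA : MeasurableSet A) (hAsub : A ⊆ ⋃ i, P i)
    {f : ℝ → ℝ} (hint : IntegrableOn f A) :
    ∫ x in A, f x = ∑ i, ∫ x in A ∩ P i, f x := by
  have hU : A = ⋃ i, A ∩ P i := by
    ext x
    constructor
    · intro hx
      rcases Set.mem_iUnion.1 (hAsub hx) with ⟨i, hi⟩
      exact Set.mem_iUnion.2 ⟨i, hx, hi⟩
    · intro hx
      rcases Set.mem_iUnion.1 hx with ⟨i, hi⟩
      exact hi.1
  calc ∫ x in A, f x = ∫ x in ⋃ i, A ∩ P i, f x := by rw [← hU]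
    _ = ∑' i, ∫ x in A ∩ P i, f x := by
        refine integral_iUnion (fun i => hA.inter (hPmeas i))
          (fun i j hij => (hPdisj hij).mono Set.inter_subset_right Set.inter_subset_right) ?_
        rw [← hU]; exact hint
    _ = ∑ i, ∫ x in A ∩ P i, f x := tsum_fintype _

lemma int_indicator {A B : Set ℝ} (hB : MeasurableSet B) (K : ℝ) :
    ∫ x in A, K * B.indicator (fun _ => (1:ℝ)) x = K * (volume (A ∩ B)).toReal := by
  rw [integral_const_mul K _, setIntegral_indicator hB]
  simp [setIntegral_const, Measure.real]

lemma keyA_gen {n : ℕ} {P : Fin n → Set ℝ} (hPmeas : ∀ i, MeasurableSet (P i))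
    {A B : Set ℝ} (hA : volume A ≠ ⊤) (hB : volume B ≠ ⊤) (c : Fin n → Fin n → ℝ) :
    ∫ x in A, ∫ y in B, (∑ i, ∑ j, c i j * (P i).indicator (fun _ => (1:ℝ)) x
        * (P j).indicator (fun _ => (1:ℝ)) y)
    = ∑ i, ∑ j, c i j * (volume (A ∩ P i)).toReal * (volume (B ∩ P j)).toReal := by
  have hind_int : ∀ (D : Set ℝ), volume D ≠ ⊤ → ∀ (k : Fin n) (K : ℝ),
      IntegrableOn (fun y => K * (P k).indicator (fun _ => (1:ℝ)) y) D := by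
    intro D hD k K
    refine integrableOn_of_bdd (C := |K|) ?_ hD ?_
    · exact (measurable_const.mul (measurable_const.indicator (hPmeas k))).aestronglyMeasurable
    · intro x
      rw [abs_mul]
      by_cases h : x ∈ P k <;>
        simp [Set.indicator_of_mem, Set.indicator_of_notMem, h, abs_nonneg]
  have hinner : ∀ x : ℝ, (∫ y in B, ∑ i, ∑ j, c i j * (P i).indicator (fun _ => (1:ℝ)) x
        * (P j).indicator (fun _ => (1:ℝ)) y)
      = ∑ i, ∑ j, c i j * (volume (B ∩ P j)).toReal * (P i).indicator (fun _ => (1:ℝ)) x := by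
    intro x
    rw [integral_finset_sum _ (fun i _ => integrable_finset_sum _ fun j _ => hind_int B hB j _)]
    refine Finset.sum_congr rfl fun i _ => ?_
    rw [integral_finset_sum _ (fun j _ => hind_int B hB j _)]
    refine Finset.sum_congr rfl fun j _ => ?_
    rw [int_indicator (hPmeas j) (c i j * (P i).indicator (fun _ => (1:ℝ)) x)]
    ring
  calc (∫ x in A, ∫ y in B, ∑ i, ∑ j, c i j * (P i).indicator (fun _ => (1:ℝ)) x
        * (P j).indicator (fun _ => (1:ℝ)) y)
      = ∫ x in A, ∑ i, ∑ j, c i j * (volume (B ∩ P j)).toReal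
          * (P i).indicator (fun _ => (1:ℝ)) x :=
        integral_congr_ae (Filter.Eventually.of_forall fun x => hinner x)
    _ = ∑ i, ∑ j, c i j * (volume (B ∩ P j)).toReal * (volume (A ∩ P i)).toReal := by
        rw [integral_finset_sum _ (fun i _ => integrable_finset_sum _ fun j _ => hind_int A hA i _)]
        refine Finset.sum_congr rfl fun i _ => ?_
        rw [integral_finset_sum _ (fun j _ => hind_int A hA i _)]
        exact Finset.sum_congr rfl fun j _ => int_indicator (hPmeas i) _
    _ = ∑ i, ∑ j, c i j * (volume (A ∩ P i)).toReal * (volume (B ∩ P j)).toReal :=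
        Finset.sum_congr rfl fun i _ => Finset.sum_congr rfl fun j _ => by ring

theorem stmt_7 (W : ℝ → ℝ → ℝ)
    (hmeas : Measurable fun p : ℝ × ℝ => W p.1 p.2)
    (hsym : ∀ x y, W x y = W y x)
    (h0 : ∀ x y, 0 ≤ W x y) (h1 : ∀ x y, W x y ≤ 1)
    (hconn : GraphonConnected W)
    {n : ℕ} (hn : 0 < n) (P : Fin n → Set ℝ)
    (hPmeas : ∀ i, MeasurableSet (P i))
    (hPpos : ∀ i, 0 < volume (P i))
    (hPdisj : Pairwise fun i j => Disjoint (P i) (P j))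
    (hPcover : (⋃ i, P i) = Set.Icc (0:ℝ) 1) :
    GraphonConnected (fun x y => ∑ i : Fin n, ∑ j : Fin n,
      ((∫ s in P i, ∫ t in P j, W s t) /
          ((volume (P i)).toReal * (volume (P j)).toReal))
        * (P i).indicator (fun _ => (1:ℝ)) x * (P j).indicator (fun _ => (1:ℝ)) y) := by
  intro S hS hSsub hS0 hS1
  set T : Set ℝ := Set.Icc (0:ℝ) 1 \ S with hTdef
  have hT : MeasurableSet T := measurableSet_Icc.diff hS
  have hIcc : volume (Set.Icc (0:ℝ) 1) = 1 := by simp [Real.volume_Icc]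
  have hsub_fin : ∀ {A : Set ℝ}, A ⊆ Set.Icc (0:ℝ) 1 → volume A ≤ 1 := by
    intro A h
    calc volume A ≤ volume (Set.Icc (0:ℝ) 1) := measure_mono h
      _ = 1 := hIcc
  have hTsub : T ⊆ Set.Icc (0:ℝ) 1 := Set.diff_subset
  have hfin : ∀ {A : Set ℝ}, A ⊆ Set.Icc (0:ℝ) 1 → volume A ≠ ⊤ := fun {A} h =>
    (lt_of_le_of_lt (hsub_fin h) ENNReal.one_lt_top).ne
  have hPsub : ∀ k, P k ⊆ Set.Icc (0:ℝ) 1 := by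
    intro k; rw [← hPcover]; exact Set.subset_iUnion P k
  have hcov' : ∀ {A : Set ℝ}, A ⊆ Set.Icc (0:ℝ) 1 → A ⊆ ⋃ i, P i := by
    intro A h; rw [hPcover]; exact h
  -- basic facts about W
  have hWx : ∀ x, Measurable (W x) := fun x => hmeas.comp measurable_prodMk_left
  have hWabs : ∀ x y, |W x y| ≤ 1 := fun x y => abs_le.2 ⟨by linarith [h0 x y], h1 x y⟩
  have hWint : ∀ (x : ℝ) {B : Set ℝ}, volume B ≠ ⊤ → IntegrableOn (W x) B :=
    fun x B hB => integrableOn_of_bdd ((hWx x).aestronglyMeasurable) hB (hWabs x)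
  have hFsm : ∀ B : Set ℝ, StronglyMeasurable fun x => ∫ y in B, W x y :=
    fun B => hmeas.stronglyMeasurable.integral_prod_right
  have hFnn : ∀ (B : Set ℝ) (x : ℝ), 0 ≤ ∫ y in B, W x y :=
    fun B x => integral_nonneg fun y => h0 x y
  have hFbd : ∀ {B : Set ℝ}, B ⊆ Set.Icc (0:ℝ) 1 → ∀ x, |∫ y in B, W x y| ≤ 1 := by
    intro B hB x
    have hBfin : volume B ≠ ⊤ := hfin hB
    rw [abs_of_nonneg (hFnn B x)]
    calc ∫ y in B, W x y ≤ ∫ y in B, (1:ℝ) :=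
          integral_mono (hWint x hBfin)
            ((integrableOn_const_iff (C := (1:ℝ))).2 (Or.inr hBfin.lt_top)) (fun y => h1 x y)
      _ = (volume B).toReal := by simp [setIntegral_const, Measure.real]
      _ ≤ 1 := by simpa using ENNReal.toReal_mono (by simp) (hsub_fin hB)
  have hFint : ∀ {A B : Set ℝ}, volume A ≠ ⊤ → B ⊆ Set.Icc (0:ℝ) 1 →
      IntegrableOn (fun x => ∫ y in B, W x y) A :=
    fun {A B} hA hB => integrableOn_of_bdd ((hFsm B).aestronglyMeasurable) hA (hFbd hB)
  -- Step B: find a pair (i,j) with positive flow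
  have hpos : 0 < ∫ x in S, ∫ y in T, W x y := hconn S hS hSsub hS0 hS1
  have keyB : ∫ x in S, ∫ y in T, W x y
      = ∑ i, ∑ j, ∫ x in S ∩ P i, ∫ y in T ∩ P j, W x y := by
    rw [split_integral hPmeas hPdisj hS (hcov' hSsub) (hFint (hfin hSsub) hTsub)]
    refine Finset.sum_congr rfl fun i _ => ?_
    have hinner : ∀ x : ℝ, ∫ y in T, W x y = ∑ j, ∫ y in T ∩ P j, W x y :=
      fun x => split_integral hPmeas hPdisj hT (hcov' hTsub) (hWint x (hfin hTsub))
    calc ∫ x in S ∩ P i, ∫ y in T, W x y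
        = ∫ x in S ∩ P i, ∑ j, ∫ y in T ∩ P j, W x y :=
          integral_congr_ae (Filter.Eventually.of_forall fun x => hinner x)
      _ = ∑ j, ∫ x in S ∩ P i, ∫ y in T ∩ P j, W x y := by
          refine integral_finset_sum _ fun j _ => ?_
          exact hFint (hfin (Set.inter_subset_left.trans hSsub))
            (Set.inter_subset_left.trans hTsub)
  obtain ⟨i, j, hij⟩ : ∃ i j, 0 < ∫ x in S ∩ P i, ∫ y in T ∩ P j, W x y := by
    by_contra h
    push_neg at h
    have hle : ∫ x in S, ∫ y in T, W x y ≤ 0 := by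
      rw [keyB]
      exact Finset.sum_nonpos fun i _ => Finset.sum_nonpos fun j _ => h i j
    linarith
  have hSPfin : volume (S ∩ P i) ≠ ⊤ := hfin (Set.inter_subset_left.trans hSsub)
  have hTPfin : volume (T ∩ P j) ≠ ⊤ := hfin (Set.inter_subset_left.trans hTsub)
  have ha : 0 < (volume (S ∩ P i)).toReal := by
    rcases eq_or_ne (volume (S ∩ P i)) 0 with h0' | h0'
    · rw [Measure.restrict_eq_zero.2 h0', integral_zero_measure] at hij
      exact absurd hij (lt_irrefl 0)
    · exact ENNReal.toReal_pos h0' hSPfin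
  have hb : 0 < (volume (T ∩ P j)).toReal := by
    rcases eq_or_ne (volume (T ∩ P j)) 0 with h0' | h0'
    · exfalso
      have hz : ∀ x : ℝ, ∫ y in T ∩ P j, W x y = 0 := fun x => by
        rw [Measure.restrict_eq_zero.2 h0', integral_zero_measure]
      rw [integral_congr_ae (Filter.Eventually.of_forall hz)] at hij
      simp at hij
    · exact ENNReal.toReal_pos h0' hTPfin
  have hnum : 0 < ∫ s in P i, ∫ t in P j, W s t := by
    refine lt_of_lt_of_le hij ?_
    calc ∫ x in S ∩ P i, ∫ y in T ∩ P j, W x y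
        ≤ ∫ x in S ∩ P i, ∫ y in P j, W x y := by
          refine integral_mono (hFint hSPfin (Set.inter_subset_left.trans hTsub))
            (hFint hSPfin (hPsub j)) fun x => ?_
          exact setIntegral_mono_set (hWint x (hfin (hPsub j)))
            (Filter.Eventually.of_forall fun y => h0 x y)
            (HasSubset.Subset.eventuallyLE Set.inter_subset_right)
      _ ≤ ∫ x in P i, ∫ y in P j, W x y :=
          setIntegral_mono_set (hFint (hfin (hPsub i)) (hPsub j))
            (Filter.Eventually.of_forall fun x => hFnn _ x)
            (HasSubset.Subset.eventuallyLE Set.inter_subset_right)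
  -- Step A: compute the integral of the step graphon
  have keyA := keyA_gen hPmeas (hfin hSsub) (hfin hTsub)
    (fun i j => (∫ s in P i, ∫ t in P j, W s t) /
      ((volume (P i)).toReal * (volume (P j)).toReal))
  show 0 < ∫ x in S, ∫ y in T, ∑ i, ∑ j,
      ((∫ s in P i, ∫ t in P j, W s t) /
          ((volume (P i)).toReal * (volume (P j)).toReal))
        * (P i).indicator (fun _ => (1:ℝ)) x * (P j).indicator (fun _ => (1:ℝ)) y
  rw [keyA]
  have hterm_nn : ∀ i' j' : Fin n, 0 ≤ ((∫ s in P i', ∫ t in P j', W s t) /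
      ((volume (P i')).toReal * (volume (P j')).toReal))
        * (volume (S ∩ P i')).toReal * (volume (T ∩ P j')).toReal := by
    intro i' j'
    refine mul_nonneg (mul_nonneg (div_nonneg ?_ ?_) ENNReal.toReal_nonneg) ENNReal.toReal_nonneg
    · exact integral_nonneg fun x => hFnn _ x
    · exact mul_nonneg ENNReal.toReal_nonneg ENNReal.toReal_nonneg
  have hterm_pos : 0 < ((∫ s in P i, ∫ t in P j, W s t) /
      ((volume (P i)).toReal * (volume (P j)).toReal))
        * (volume (S ∩ P i)).toReal * (volume (T ∩ P j)).toReal := by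
    refine mul_pos (mul_pos (div_pos hnum ?_) ha) hb
    exact mul_pos (ENNReal.toReal_pos (hPpos i).ne' (hfin (hPsub i)))
      (ENNReal.toReal_pos (hPpos j).ne' (hfin (hPsub j)))
  calc (0:ℝ) < _ := hterm_pos
    _ ≤ ∑ j' : Fin n, ((∫ s in P i, ∫ t in P j', W s t) /
          ((volume (P i)).toReal * (volume (P j')).toReal))
        * (volume (S ∩ P i)).toReal * (volume (T ∩ P j')).toReal :=
        Finset.single_le_sum (fun j' _ => hterm_nn i j') (Finset.mem_univ j)
    _ ≤ ∑ i' : Fin n, ∑ j' : Fin n, ((∫ s in P i', ∫ t in P j', W s t) /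
          ((volume (P i')).toReal * (volume (P j')).toReal))
        * (volume (S ∩ P i')).toReal * (volume (T ∩ P j')).toReal :=
        Finset.single_le_sum (fun i' _ => Finset.sum_nonneg fun j' _ => hterm_nn i' j')
          (Finset.mem_univ i)
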